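/- Let F be a finite family of pairwise interior-disjoint closed disks in the plane. If F admits two distinct line transversals that meet the disks in the same order, then F admits a line transversal meeting the disks in that same order and intersecting the interior of every disk. -/

import Mathlib

open Real

namespace TvAux

abbrev E := EuclideanSpace ℝ (Fin 2)

noncomputable def J (w : E) : E := WithLp.toLp 2 (fun j => if j = 0 then -(w 1) else w 0 : Fin 2 → ℝ)

lemma J_zero (w : E) : J w 0 = -(w 1) := rfl
lemma J_one (w : E) : J w 1 = w 0 := rfl

lemma inner_coords (x y : E) : (inner ℝ x y : ℝ) = x 0 * y 0 + x 1 * y 1 := by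
  simp [PiLp.inner_apply, Fin.sum_univ_two, RCLike.inner_apply]; ring

lemma normsq (x : E) : ‖x‖^2 = x 0^2 + x 1^2 := by
  rw [← real_inner_self_eq_norm_sq, inner_coords]; ring

lemma unit_sq {w : E} (hw : ‖w‖ = 1) : w 0^2 + w 1^2 = 1 := by
  rw [← normsq, hw]; norm_num

lemma basis_J {w : E} (hw : ‖w‖ = 1) (x : E) :
    ‖x‖^2 = (inner ℝ x w : ℝ)^2 + (inner ℝ x (J w) : ℝ)^2 := by
  have h := unit_sq hw
  rw [normsq, inner_coords, inner_coords, J_zero, J_one]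
  linear_combination (-(x 0^2 + x 1^2)) * h

lemma norm_J (w : E) : ‖J w‖ = ‖w‖ := by
  have h1 : ‖J w‖^2 = ‖w‖^2 := by rw [normsq, normsq, J_zero, J_one]; ring
  have := abs_eq_abs.2 (Or.inl (by nlinarith [norm_nonneg (J w), norm_nonneg w] : ‖J w‖ = ‖w‖))
  nlinarith [norm_nonneg (J w), norm_nonneg w]

lemma lagrange {v : E} (hv : ‖v‖ = 1) (x w : E) :
    (inner ℝ x (J w) : ℝ) = (inner ℝ w v : ℝ) * (inner ℝ x (J v) : ℝ)
      - (inner ℝ w (J v) : ℝ) * (inner ℝ x v : ℝ) := by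
  have h := unit_sq hv
  simp only [inner_coords, J_zero, J_one]
  linear_combination (x 0 * w 1 - x 1 * w 0) * h

lemma decompose_inner {v : E} (hv : ‖v‖ = 1) (x w : E) :
    (inner ℝ x w : ℝ) = (inner ℝ w v : ℝ) * (inner ℝ x v : ℝ)
      + (inner ℝ w (J v) : ℝ) * (inner ℝ x (J v) : ℝ) := by
  have h := unit_sq hv
  simp only [inner_coords, J_zero, J_one]
  linear_combination (-(x 0 * w 0 + x 1 * w 1)) * h

lemma decompose_vec {v : E} (hv : ‖v‖ = 1) (x : E) :
    x = (inner ℝ x v : ℝ) • v + (inner ℝ x (J v) : ℝ) • (J v) := by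
  have h := unit_sq hv
  ext i
  fin_cases i <;>
  · simp only [Fin.zero_eta, Fin.mk_one, PiLp.add_apply, PiLp.smul_apply, smul_eq_mul,
      inner_coords, J_zero, J_one]
    first
    | linear_combination (-(x 0)) * h
    | linear_combination (-(x 1)) * h


lemma exists_pos_forall_le {κ : Type*} [Finite κ] (f : κ → ℝ) (hf : ∀ k, 0 < f k) :
    ∃ ε > 0, ∀ k, ε ≤ f k := by
  cases isEmpty_or_nonempty κ with
  | inl h => exact ⟨1, one_pos, fun k => (IsEmpty.false k).elim⟩
  | inr h =>
    have : Fintype κ := Fintype.ofFinite κ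
    obtain ⟨k0, -, hk0⟩ := Finset.exists_min_image Finset.univ f
      ⟨Classical.arbitrary κ, Finset.mem_univ _⟩
    exact ⟨f k0, hf k0, fun k => hk0 k (Finset.mem_univ k)⟩

variable {u n : E}

lemma inner_un (hu : ‖u‖ = 1)
    (hb : ∀ x : E, ‖x‖^2 = (inner ℝ x u : ℝ)^2 + (inner ℝ x n : ℝ)^2) :
    (inner ℝ u n : ℝ) = 0 := by
  have h := hb u
  have huu : (inner ℝ u u : ℝ) = 1 := by rw [real_inner_self_eq_norm_sq, hu]; norm_num
  rw [hu, huu] at h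
  nlinarith [sq_nonneg (inner ℝ u n : ℝ)]

lemma dist_line_le (hu : ‖u‖ = 1)
    (hb : ∀ x : E, ‖x‖^2 = (inner ℝ x u : ℝ)^2 + (inner ℝ x n : ℝ)^2)
    (p cc : E) (rr t : ℝ) (h : dist (p + t • u) cc ≤ rr) :
    |(inner ℝ (cc - p) n : ℝ)| ≤ rr := by
  have hun := inner_un hu hb
  have hd : dist (p + t • u) cc = ‖cc - p - t • u‖ := by
    rw [dist_eq_norm']; congr 1; abel
  have h2 : (inner ℝ (cc - p - t • u) n : ℝ) = (inner ℝ (cc - p) n : ℝ) := by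
    rw [inner_sub_left, real_inner_smul_left, hun]; ring
  have h3 := hb (cc - p - t • u)
  have h4 : ‖cc - p - t • u‖ ≤ rr := by rw [← hd]; exact h
  have h5 : (0:ℝ) ≤ ‖cc - p - t • u‖ := norm_nonneg _
  rw [abs_le]
  constructor <;> nlinarith [sq_nonneg ((inner ℝ (cc - p - t • u) u : ℝ))]

lemma exists_dist_lt (hu : ‖u‖ = 1)
    (hb : ∀ x : E, ‖x‖^2 = (inner ℝ x u : ℝ)^2 + (inner ℝ x n : ℝ)^2)
    (p cc : E) (rr : ℝ) (h : |(inner ℝ (cc - p) n : ℝ)| < rr) :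
    ∃ t : ℝ, dist (p + t • u) cc < rr := by
  have huu : (inner ℝ u u : ℝ) = 1 := by rw [real_inner_self_eq_norm_sq, hu]; norm_num
  have hun := inner_un hu hb
  refine ⟨(inner ℝ (cc - p) u : ℝ), ?_⟩
  set t : ℝ := (inner ℝ (cc - p) u : ℝ) with ht
  have hd : dist (p + t • u) cc = ‖cc - p - t • u‖ := by
    rw [dist_eq_norm']; congr 1; abel
  have h2u : (inner ℝ (cc - p - t • u) u : ℝ) = 0 := by
    rw [inner_sub_left, real_inner_smul_left, huu]; ring
  have h2n : (inner ℝ (cc - p - t • u) n : ℝ) = (inner ℝ (cc - p) n : ℝ) := by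
    rw [inner_sub_left, real_inner_smul_left, hun]; ring
  have h3 := hb (cc - p - t • u)
  rw [h2u, h2n] at h3
  rw [hd]
  have h5 : (0:ℝ) ≤ ‖cc - p - t • u‖ := norm_nonneg _
  have h6 := abs_nonneg (inner ℝ (cc - p) n : ℝ)
  nlinarith [sq_abs (inner ℝ (cc - p) n : ℝ)]

lemma key (α β K ti tj ri rj : ℝ) (hβ : 0 < β) (hri : 0 < ri) (hrj : 0 < rj)
    (hαβ : α^2 + β^2 = 1)
    (h1 : |α*ri - β*ti - K| ≤ ri) (h2 : |α*rj + β*tj + K| ≤ rj)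
    (hij : ti < tj) (hord : α*ti + β*ri < α*tj - β*rj) : False := by
  rw [abs_le] at h1 h2
  have hD : 0 < tj - ti := sub_pos.2 hij
  have hA : β*(tj - ti) ≤ (ri + rj)*(1 - α) := by nlinarith [h1.2, h2.2]
  have hB : β*(ri + rj) < α*(tj - ti) := by nlinarith [hord]
  have hα : 0 < α := by
    by_contra hcon
    push_neg at hcon
    have h3 : α*(tj - ti) ≤ 0 := mul_nonpos_of_nonpos_of_nonneg hcon hD.le
    nlinarith [mul_pos hβ (show (0:ℝ) < ri + rj by linarith)]
  nlinarith [mul_lt_mul_of_pos_left hB hβ, mul_le_mul_of_nonneg_left hA hα.le,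
    sq_nonneg β, sq_nonneg (α - 1), mul_pos hri hrj]

lemma translation {ι : Type*} [Finite ι] (c : ι → E) (r : ι → ℝ) (hr : ∀ i, 0 < r i)
    {u n : E} (hu : ‖u‖ = 1) (hnn : (inner ℝ n n : ℝ) = 1)
    (hb : ∀ x : E, ‖x‖^2 = (inner ℝ x u : ℝ)^2 + (inner ℝ x n : ℝ)^2)
    (p1 : E)
    (hs : ∀ i, |(inner ℝ (c i - p1) n : ℝ)| ≤ r i)
    (hne : ∀ i, (inner ℝ (c i - p1) n : ℝ) ≠ -r i) :
    ∃ p v : E, ‖v‖ = 1 ∧ (∀ i, ∃ t : ℝ, dist (p + t • v) (c i) < r i) ∧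
      (∀ i j : ι, (inner ℝ (c i) u : ℝ) < inner ℝ (c j) u →
        (inner ℝ (c i) v : ℝ) < inner ℝ (c j) v) := by
  classical
  set s : ι → ℝ := fun i => (inner ℝ (c i - p1) n : ℝ) with hsdef
  have hf : ∀ i, 0 < (if s i = r i then r i else r i - |s i|) := by
    intro i
    by_cases h : s i = r i
    · simpa [h] using hr i
    · rw [if_neg h]
      have h1 : |s i| ≤ r i := hs i
      have h2 : |s i| ≠ r i := by
        intro habs
        rcases (abs_eq (hr i).le).1 habs with h3 | h3
        · exact h h3
        · exact hne i h3
      have := lt_of_le_of_ne h1 h2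
      linarith
  obtain ⟨ε0, hε0, hle⟩ := exists_pos_forall_le _ hf
  set η := ε0 / 2 with hηdef
  have hη : ∀ i, |s i - η| < r i := by
    intro i
    have hlei := hle i
    rw [abs_lt]
    by_cases h : s i = r i
    · rw [if_pos h] at hlei
      constructor <;> [linarith; linarith]
    · rw [if_neg h] at hlei
      have h1 := abs_le.1 (hs i)
      have h2 := le_abs_self (s i)
      have h3 := neg_abs_le (s i)
      constructor <;> [linarith; linarith]
  refine ⟨p1 + η • n, u, hu, ?_, fun i j h => h⟩
  intro i
  apply exists_dist_lt hu hb
  have hvec : c i - (p1 + η • n) = (c i - p1) - η • n := by abel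
  have hinner : (inner ℝ (c i - (p1 + η • n)) n : ℝ) = s i - η := by
    rw [hvec, inner_sub_left, real_inner_smul_left, hnn, hsdef]
    ring
  rw [hinner]
  exact hη i

set_option maxHeartbeats 1000000 in
lemma rotation {ι : Type*} [Finite ι] (c : ι → E) (r : ι → ℝ) (hr : ∀ i, 0 < r i)
    {u n : E} (hu : ‖u‖ = 1) (hnn : (inner ℝ n n : ℝ) = 1)
    (hb : ∀ x : E, ‖x‖^2 = (inner ℝ x u : ℝ)^2 + (inner ℝ x n : ℝ)^2)
    (p1 : E) (q' : ℝ)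
    (hs : ∀ i, |(inner ℝ (c i - p1) n : ℝ)| ≤ r i)
    (hA : ∀ i, (inner ℝ (c i - p1) n : ℝ) = r i → (inner ℝ (c i - p1) u : ℝ) ≤ q')
    (hB : ∀ i, (inner ℝ (c i - p1) n : ℝ) = -r i → q' ≤ (inner ℝ (c i - p1) u : ℝ)) :
    ∃ p v : E, ‖v‖ = 1 ∧ (∀ i, ∃ t : ℝ, dist (p + t • v) (c i) < r i) ∧
      (∀ i j : ι, (inner ℝ (c i) u : ℝ) < inner ℝ (c j) u →
        (inner ℝ (c i) v : ℝ) < inner ℝ (c j) v) := by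
  classical
  have huu : (inner ℝ u u : ℝ) = 1 := by rw [real_inner_self_eq_norm_sq, hu]; norm_num
  have hun : (inner ℝ u n : ℝ) = 0 := inner_un hu hb
  set s : ι → ℝ := fun i => (inner ℝ (c i - p1) n : ℝ) with hsdef
  set τ : ι → ℝ := fun i => (inner ℝ (c i - p1) u : ℝ) with hτdef
  clear_value s τ
  have hse : ∀ i, s i = (inner ℝ (c i - p1) n : ℝ) := fun i => by rw [hsdef]
  have hτe : ∀ i, τ i = (inner ℝ (c i - p1) u : ℝ) := fun i => by rw [hτdef]
  have hs' : ∀ i, |s i| ≤ r i := fun i => by rw [hse i]; exact hs i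
  have hA' : ∀ i, s i = r i → τ i ≤ q' := fun i h => by
    rw [hτe i]; exact hA i (by rw [← hse i]; exact h)
  have hB' : ∀ i, s i = -r i → q' ≤ τ i := fun i h => by
    rw [hτe i]; exact hB i (by rw [← hse i]; exact h)
  clear hsdef hτdef hs hA hB
  obtain ⟨f, hf1, hf2⟩ : ∃ f : ι ⊕ ι × ι → ℝ,
      (∀ i, f (Sum.inl i) = (if |s i| = r i then 2 * r i else r i - |s i|) / (|τ i - q'| + 1)) ∧
      (∀ i j : ι, f (Sum.inr (i, j)) =
        if (inner ℝ (c i) u : ℝ) < (inner ℝ (c j) u : ℝ) then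
          ((inner ℝ (c j) u : ℝ) - (inner ℝ (c i) u : ℝ)) /
            (|(inner ℝ (c j) n : ℝ) - (inner ℝ (c i) n : ℝ)| + 1)
        else 1) :=
    ⟨fun k => match k with
      | Sum.inl i => (if |s i| = r i then 2 * r i else r i - |s i|) / (|τ i - q'| + 1)
      | Sum.inr (i, j) =>
        if (inner ℝ (c i) u : ℝ) < (inner ℝ (c j) u : ℝ) then
          ((inner ℝ (c j) u : ℝ) - (inner ℝ (c i) u : ℝ)) /
            (|(inner ℝ (c j) n : ℝ) - (inner ℝ (c i) n : ℝ)| + 1)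
        else 1, fun i => rfl, fun i j => rfl⟩
  have hf : ∀ k, 0 < f k := by
    rintro (i | ⟨i, j⟩)
    · rw [hf1 i]
      have hC : 0 < (if |s i| = r i then 2 * r i else r i - |s i|) := by
        by_cases h : |s i| = r i
        · rw [if_pos h]; linarith [hr i]
        · rw [if_neg h]; have := lt_of_le_of_ne (hs' i) h; linarith
      exact div_pos hC (by positivity)
    · rw [hf2 i j]
      by_cases h : (inner ℝ (c i) u : ℝ) < (inner ℝ (c j) u : ℝ)
      · rw [if_pos h]; exact div_pos (by linarith) (by positivity)
      · rw [if_neg h]; norm_num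
  obtain ⟨ε, hε, hle⟩ := exists_pos_forall_le f hf
  set N := Real.sqrt (1 + ε^2) with hNdef
  have hN2 : N^2 = 1 + ε^2 := Real.sq_sqrt (by positivity)
  have hN1 : 1 < N := by nlinarith [Real.sqrt_nonneg (1 + ε^2)]
  have hN0 : (0:ℝ) < N := lt_trans one_pos hN1
  clear_value N
  obtain ⟨v, hvdef⟩ : ∃ v : E, v = (1/N) • (u - ε • n) := ⟨_, rfl⟩
  obtain ⟨m, hmdef⟩ : ∃ m : E, m = (1/N) • (n + ε • u) := ⟨_, rfl⟩
  have hxv : ∀ x : E, (inner ℝ x v : ℝ) = ((inner ℝ x u : ℝ) - ε * (inner ℝ x n : ℝ)) / N := by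
    intro x
    rw [hvdef, real_inner_smul_right, inner_sub_right, real_inner_smul_right]
    field_simp
  have hxm : ∀ x : E, (inner ℝ x m : ℝ) = ((inner ℝ x n : ℝ) + ε * (inner ℝ x u : ℝ)) / N := by
    intro x
    rw [hmdef, real_inner_smul_right, inner_add_right, real_inner_smul_right]
    field_simp
  have hnu : (inner ℝ n u : ℝ) = 0 := by rw [real_inner_comm]; exact hun
  have hvnorm : ‖v‖ = 1 := by
    have h1 : ‖v‖^2 = 1 := by
      rw [hb v, real_inner_comm u v, real_inner_comm n v, hxv u, hxv n, huu, hun, hnn, hnu]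
      field_simp
      linarith [hN2]
    have h2 : (‖v‖ - 1) * (‖v‖ + 1) = 0 := by nlinarith
    rcases mul_eq_zero.1 h2 with h | h
    · linarith
    · linarith [norm_nonneg v]
  have hbvm : ∀ x : E, ‖x‖^2 = (inner ℝ x v : ℝ)^2 + (inner ℝ x m : ℝ)^2 := by
    intro x
    rw [hxv x, hxm x, hb x, div_pow, div_pow, ← add_div, eq_div_iff (by positivity)]
    linear_combination ((inner ℝ x u : ℝ)^2 + (inner ℝ x n : ℝ)^2) * hN2
  have hum : (inner ℝ u m : ℝ) = ε / N := by rw [hxm u, huu, hun]; ring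
  refine ⟨p1 + q' • u, v, hvnorm, ?_, ?_⟩
  · intro i
    apply exists_dist_lt hvnorm hbvm
    have hvec : c i - (p1 + q' • u) = (c i - p1) - q' • u := by abel
    have hinner : (inner ℝ (c i - (p1 + q' • u)) m : ℝ) = (s i + ε * (τ i - q')) / N := by
      rw [hvec, inner_sub_left, real_inner_smul_left, hum, hxm, ← hse i, ← hτe i]
      field_simp
      ring
    rw [hinner]
    have hεb : ε * |τ i - q'| ≤ (if |s i| = r i then 2 * r i else r i - |s i|) := by
      have h1 : ε ≤ f (Sum.inl i) := hle (Sum.inl i)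
      rw [hf1 i] at h1
      set C := if |s i| = r i then 2 * r i else r i - |s i| with hCdef
      have hC : 0 < C := by
        rw [hCdef]
        by_cases h : |s i| = r i
        · rw [if_pos h]; linarith [hr i]
        · rw [if_neg h]; have := lt_of_le_of_ne (hs' i) h; linarith
      have h3 : ε * |τ i - q'| ≤ (C / (|τ i - q'| + 1)) * |τ i - q'| :=
        mul_le_mul_of_nonneg_right h1 (abs_nonneg _)
      have h4 : (C / (|τ i - q'| + 1)) * |τ i - q'| ≤ C := by
        rw [div_mul_eq_mul_div, div_le_iff₀ (by positivity)]
        nlinarith [abs_nonneg (τ i - q')]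
      linarith
    have hkey : |s i + ε * (τ i - q')| ≤ r i := by
      by_cases hti : |s i| = r i
      · rw [if_pos hti] at hεb
        rcases (abs_eq (hr i).le).1 hti with h | h
        · have hq := hA' i h
          have h1 : ε * (τ i - q') ≤ 0 :=
            mul_nonpos_of_nonneg_of_nonpos hε.le (by linarith)
          have h2 : -(2 * r i) ≤ ε * (τ i - q') := by
            nlinarith [neg_abs_le (τ i - q')]
          rw [h, abs_le]
          constructor <;> linarith
        · have hq := hB' i h
          have h1 : 0 ≤ ε * (τ i - q') := mul_nonneg hε.le (by linarith)
          have h2 : ε * (τ i - q') ≤ 2 * r i := by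
            nlinarith [le_abs_self (τ i - q')]
          rw [h, abs_le]
          constructor <;> linarith
      · rw [if_neg hti] at hεb
        have h2 : |s i| < r i := lt_of_le_of_ne (hs' i) hti
        calc |s i + ε * (τ i - q')| ≤ |s i| + |ε * (τ i - q')| := abs_add_le _ _
          _ ≤ |s i| + ε * |τ i - q'| := by rw [abs_mul, abs_of_pos hε]
          _ ≤ r i := by linarith
    rw [abs_div, abs_of_pos hN0]
    calc |s i + ε * (τ i - q')| / N ≤ r i / N :=
          div_le_div_of_nonneg_right hkey hN0.le
      _ < r i := div_lt_self (hr i) hN1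
  · intro i j hij
    have hε2 : ε ≤ f (Sum.inr (i, j)) := hle (Sum.inr (i, j))
    rw [hf2 i j, if_pos hij] at hε2
    rw [hxv (c i), hxv (c j), div_lt_div_iff₀ hN0 hN0]
    set Δ := (inner ℝ (c j) u : ℝ) - (inner ℝ (c i) u : ℝ) with hΔdef
    set S := (inner ℝ (c j) n : ℝ) - (inner ℝ (c i) n : ℝ) with hSdef
    have hΔ : 0 < Δ := sub_pos.2 hij
    have h3 : ε * |S| ≤ (Δ / (|S| + 1)) * |S| := mul_le_mul_of_nonneg_right hε2 (abs_nonneg _)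
    have h4 : (Δ / (|S| + 1)) * |S| < Δ := by
      rw [div_mul_eq_mul_div, div_lt_iff₀ (by positivity)]
      nlinarith [abs_nonneg S]
    have h5 : ε * S ≤ ε * |S| := mul_le_mul_of_nonneg_left (le_abs_self S) hε.le
    have h6 : 0 < Δ - ε * S := by linarith
    rw [hΔdef, hSdef] at h6
    nlinarith [mul_pos h6 hN0]

end TvAux

open TvAux in
set_option maxHeartbeats 1000000 in
/-- if a finite family of interior-disjoint closed disks in the plane has two
distinct line transversals meeting the disks in the same order, then it has a transversal
meeting the disks in that order through the interior of every disk. -/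
theorem transversal_through_interiors {ι : Type*} [Finite ι]
    (c : ι → EuclideanSpace ℝ (Fin 2)) (r : ι → ℝ) (hr : ∀ i, 0 < r i)
    (hdisj : ∀ i j : ι, i ≠ j → r i + r j ≤ dist (c i) (c j))
    (p₁ v₁ p₂ v₂ : EuclideanSpace ℝ (Fin 2)) (hv₁ : ‖v₁‖ = 1) (hv₂ : ‖v₂‖ = 1)
    (htrans₁ : ∀ i, ∃ t : ℝ, dist (p₁ + t • v₁) (c i) ≤ r i)
    (htrans₂ : ∀ i, ∃ t : ℝ, dist (p₂ + t • v₂) (c i) ≤ r i)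
    (hdistinct : Set.range (fun t : ℝ => p₁ + t • v₁) ≠
      Set.range (fun t : ℝ => p₂ + t • v₂))
    (horder : ∀ i j : ι, (inner ℝ (c i) v₁ : ℝ) < inner ℝ (c j) v₁ →
      (inner ℝ (c i) v₂ : ℝ) < inner ℝ (c j) v₂) :
    ∃ p v : EuclideanSpace ℝ (Fin 2), ‖v‖ = 1 ∧
      (∀ i, ∃ t : ℝ, dist (p + t • v) (c i) < r i) ∧
      (∀ i j : ι, (inner ℝ (c i) v₁ : ℝ) < inner ℝ (c j) v₁ →
        (inner ℝ (c i) v : ℝ) < inner ℝ (c j) v) := by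
  classical
  have _fin : Fintype ι := Fintype.ofFinite ι
  have hb1 : ∀ x : E, ‖x‖^2 = (inner ℝ x v₁ : ℝ)^2 + (inner ℝ x (J v₁) : ℝ)^2 :=
    fun x => basis_J hv₁ x
  have hn1 : ‖J v₁‖ = 1 := by rw [norm_J, hv₁]
  have hnn1 : (inner ℝ (J v₁) (J v₁) : ℝ) = 1 := by
    rw [real_inner_self_eq_norm_sq, hn1]; norm_num
  have hnn1' : (inner ℝ (-(J v₁)) (-(J v₁)) : ℝ) = 1 := by rw [inner_neg_neg]; exact hnn1
  have hb1' : ∀ x : E, ‖x‖^2 = (inner ℝ x v₁ : ℝ)^2 + (inner ℝ x (-(J v₁)) : ℝ)^2 := by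
    intro x; rw [inner_neg_right, hb1 x]; ring
  obtain ⟨s, hse⟩ : ∃ s : ι → ℝ, ∀ i, s i = (inner ℝ (c i - p₁) (J v₁) : ℝ) := ⟨_, fun _ => rfl⟩
  obtain ⟨τ, hτe⟩ : ∃ τ : ι → ℝ, ∀ i, τ i = (inner ℝ (c i - p₁) v₁ : ℝ) := ⟨_, fun _ => rfl⟩
  have hs : ∀ i, |s i| ≤ r i := by
    intro i; obtain ⟨t, ht⟩ := htrans₁ i
    rw [hse i]; exact dist_line_le hv₁ hb1 _ _ _ t ht
  have hτord : ∀ i j, τ i < τ j ↔ (inner ℝ (c i) v₁ : ℝ) < (inner ℝ (c j) v₁ : ℝ) := by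
    intro i j
    rw [hτe i, hτe j, inner_sub_left, inner_sub_left]
    constructor <;> intro <;> linarith
  by_cases hpar : (inner ℝ v₂ (J v₁) : ℝ) = 0
  case pos =>
    have hα2 : (inner ℝ v₂ v₁ : ℝ)^2 = 1 := by
      have h := hb1 v₂; rw [hv₂, hpar] at h; linear_combination -h
    have hαne : (inner ℝ v₂ v₁ : ℝ) ≠ 0 := fun h => by rw [h] at hα2; norm_num at hα2
    have hv2eq : v₂ = (inner ℝ v₂ v₁ : ℝ) • v₁ := by
      have h := decompose_vec hv₁ v₂
      rw [hpar, zero_smul, add_zero] at h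
      exact h
    obtain ⟨A, hAe⟩ : ∃ a : ℝ, a = (inner ℝ v₂ v₁ : ℝ) := ⟨_, rfl⟩
    rw [← hAe] at hα2 hαne hv2eq
    have hhne : (inner ℝ (p₂ - p₁) (J v₁) : ℝ) ≠ 0 := by
      intro hh
      apply hdistinct
      have hd := decompose_vec hv₁ (p₂ - p₁)
      rw [hh, zero_smul, add_zero] at hd
      obtain ⟨G, hGe⟩ : ∃ g : ℝ, g = (inner ℝ (p₂ - p₁) v₁ : ℝ) := ⟨_, rfl⟩
      rw [← hGe] at hd
      have hp2 : p₂ = p₁ + G • v₁ := by rw [← hd]; abel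
      ext x
      simp only [Set.mem_range]
      constructor
      · rintro ⟨t, rfl⟩
        refine ⟨(t - G) / A, ?_⟩
        rw [hv2eq, hp2, smul_smul, div_mul_cancel₀ _ hαne]
        module
      · rintro ⟨t, rfl⟩
        refine ⟨G + t * A, ?_⟩
        rw [hv2eq, hp2, smul_smul]
        module
    have hs2 : ∀ i, |s i - (inner ℝ (p₂ - p₁) (J v₁) : ℝ)| ≤ r i := by
      intro i
      obtain ⟨t, ht⟩ := htrans₂ i
      have hb' : ∀ x : E, ‖x‖^2 = (inner ℝ x v₂ : ℝ)^2
          + (inner ℝ x (A • (J v₁)) : ℝ)^2 := by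
        intro x
        rw [hb1 x, hv2eq, real_inner_smul_right, real_inner_smul_right]
        linear_combination (-(inner ℝ x v₁ : ℝ)^2 - ((inner ℝ x (J v₁) : ℝ))^2) * hα2
      have h0 := dist_line_le hv₂ hb' _ _ _ t ht
      rw [real_inner_smul_right, abs_mul] at h0
      have habs : |A| = 1 := by
        have h9 : (A - 1) * (A + 1) = 0 := by linear_combination hα2
        rcases mul_eq_zero.1 h9 with h9 | h9
        · rw [show A = 1 by linarith]; norm_num
        · rw [show A = -1 by linarith]; norm_num
      rw [habs, one_mul] at h0
      have hsub : (inner ℝ (c i - p₂) (J v₁) : ℝ)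
          = s i - (inner ℝ (p₂ - p₁) (J v₁) : ℝ) := by
        have hvv : c i - p₂ = (c i - p₁) - (p₂ - p₁) := by abel
        rw [hvv, inner_sub_left, hse i]
      rw [hsub] at h0
      exact h0
    refine ⟨p₁ + (((inner ℝ (p₂ - p₁) (J v₁) : ℝ))/2) • (J v₁), v₁, hv₁, ?_, fun i j hh => hh⟩
    intro i
    apply exists_dist_lt hv₁ hb1
    have hvv : c i - (p₁ + (((inner ℝ (p₂ - p₁) (J v₁) : ℝ))/2) • (J v₁))
        = (c i - p₁) - (((inner ℝ (p₂ - p₁) (J v₁) : ℝ))/2) • (J v₁) := by abel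
    rw [hvv, inner_sub_left, real_inner_smul_left, hnn1, mul_one, ← hse i]
    have h1 := abs_le.1 (hs i)
    have h2 := abs_le.1 (hs2 i)
    rw [abs_lt]
    constructor
    · by_cases hc : s i = -(r i)
      · have hH : (inner ℝ (p₂ - p₁) (J v₁) : ℝ) < 0 :=
          lt_of_le_of_ne (by linarith [h2.1]) hhne
        linarith
      · have h3 : -(r i) < s i := lt_of_le_of_ne h1.1 (Ne.symm hc)
        linarith [h2.1]
    · by_cases hc : s i = r i
      · have hH : 0 < (inner ℝ (p₂ - p₁) (J v₁) : ℝ) :=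
          lt_of_le_of_ne (by linarith [h2.2]) (Ne.symm hhne)
        linarith
      · have h3 : s i < r i := lt_of_le_of_ne h1.2 hc
        linarith [h2.2]
  case neg =>
    have hab0 : (inner ℝ v₂ v₁ : ℝ)^2 + (inner ℝ v₂ (J v₁) : ℝ)^2 = 1 := by
      have h := hb1 v₂; rw [hv₂] at h; linear_combination -h
    have hb2 : ∀ x : E, ‖x‖^2 = (inner ℝ x v₂ : ℝ)^2 + (inner ℝ x (J v₂) : ℝ)^2 :=
      fun x => basis_J hv₂ x
    obtain ⟨α, hαe⟩ : ∃ a : ℝ, a = (inner ℝ v₂ v₁ : ℝ) := ⟨_, rfl⟩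
    obtain ⟨β, hβe⟩ : ∃ b : ℝ, b = (inner ℝ v₂ (J v₁) : ℝ) := ⟨_, rfl⟩
    obtain ⟨K, hKe⟩ : ∃ k : ℝ, k = (inner ℝ (p₂ - p₁) (J v₂) : ℝ) := ⟨_, rfl⟩
    rw [← hβe] at hpar
    rw [← hαe, ← hβe] at hab0
    have hs2 : ∀ k, |α * s k - β * τ k - K| ≤ r k := by
      intro k
      obtain ⟨t, ht⟩ := htrans₂ k
      have h0 := dist_line_le hv₂ hb2 _ _ _ t ht
      have hsplit : c k - p₂ = (c k - p₁) - (p₂ - p₁) := by abel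
      rw [hsplit, inner_sub_left, lagrange hv₁ (c k - p₁) v₂, ← hαe, ← hβe, ← hKe,
        ← hse k, ← hτe k] at h0
      exact h0
    have horder' : ∀ i j, τ i < τ j → α * τ i + β * s i < α * τ j + β * s j := by
      intro i j hij
      have h1 := horder i j ((hτord i j).1 hij)
      rw [decompose_inner hv₁ (c i) v₂, decompose_inner hv₁ (c j) v₂, ← hαe, ← hβe] at h1
      have e1i : (inner ℝ (c i) (J v₁) : ℝ) = s i + (inner ℝ p₁ (J v₁) : ℝ) := by
        rw [hse i, inner_sub_left]; ring
      have e1j : (inner ℝ (c j) (J v₁) : ℝ) = s j + (inner ℝ p₁ (J v₁) : ℝ) := by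
        rw [hse j, inner_sub_left]; ring
      have e2i : (inner ℝ (c i) v₁ : ℝ) = τ i + (inner ℝ p₁ v₁ : ℝ) := by
        rw [hτe i, inner_sub_left]; ring
      have e2j : (inner ℝ (c j) v₁ : ℝ) = τ j + (inner ℝ p₁ v₁ : ℝ) := by
        rw [hτe j, inner_sub_left]; ring
      rw [e1i, e1j, e2i, e2j] at h1
      nlinarith [h1]
    by_cases hBe : ∀ i, s i ≠ -r i
    · refine translation c r hr hv₁ hnn1 hb1 p₁ ?_ ?_
      · intro i; rw [← hse i]; exact hs i
      · intro i; rw [← hse i]; exact hBe i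
    · push_neg at hBe
      obtain ⟨j₀, hj₀⟩ := hBe
      by_cases hAe : ∀ i, s i ≠ r i
      · refine translation c r hr hv₁ hnn1' hb1' p₁ ?_ ?_
        · intro i; rw [inner_neg_right, abs_neg, ← hse i]; exact hs i
        · intro i hcon
          rw [inner_neg_right, ← hse i] at hcon
          exact hAe i (by linarith)
      · push_neg at hAe
        obtain ⟨i₀, hi₀⟩ := hAe
        have hclaim : (∀ i j, s i = r i → s j = -r j → τ j ≤ τ i) ∨
            (∀ i j, s i = r i → s j = -r j → τ i ≤ τ j) := by
          by_contra hcon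
          push_neg at hcon
          obtain ⟨⟨a, b, ha, hb', hab1⟩, a', b', ha', hb'', hab2⟩ := hcon
          have hβneg : ¬ (0 < β) := by
            intro hβ
            refine key α β K (τ a) (τ b) (r a) (r b) hβ (hr a) (hr b) hab0 ?_ ?_ hab1 ?_
            · have h9 := hs2 a; rw [ha] at h9; exact h9
            · have h9 := hs2 b; rw [hb'] at h9
              have he : α * -(r b) - β * τ b - K = -(α * (r b) + β * (τ b) + K) := by ring
              rw [he, abs_neg] at h9; exact h9
            · have h9 := horder' a b hab1; rw [ha, hb'] at h9; linarith
          have hβpos : ¬ (β < 0) := by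
            intro hβ
            refine key α (-β) K (-(τ a')) (-(τ b')) (r a') (r b') (by linarith)
              (hr a') (hr b') (by rw [neg_sq]; exact hab0) ?_ ?_ (by linarith) ?_
            · have h9 := hs2 a'; rw [ha'] at h9
              have he : α * (r a') - (-β) * (-(τ a')) - K = α * (r a') - β * (τ a') - K := by
                ring
              rw [he]; exact h9
            · have h9 := hs2 b'; rw [hb''] at h9
              have he : α * (r b') + (-β) * (-(τ b')) + K
                  = -(α * -(r b') - β * (τ b') - K) := by ring
              rw [he, abs_neg]; exact h9
            · have h9 := horder' b' a' hab2; rw [ha', hb''] at h9; linarith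
          rcases lt_trichotomy β 0 with h | h | h
          · exact hβpos h
          · exact hpar h
          · exact hβneg h
        rcases hclaim with hc | hc
        · obtain ⟨jm, hjmF, hjm⟩ := Finset.exists_max_image
            (Finset.univ.filter (fun j => s j = -r j)) τ
            ⟨j₀, by simp only [Finset.mem_filter, Finset.mem_univ, true_and]; exact hj₀⟩
          have hjmB : s jm = -r jm := by
            simpa only [Finset.mem_filter, Finset.mem_univ, true_and] using hjmF
          refine rotation c r hr hv₁ hnn1' hb1' p₁ (τ jm) ?_ ?_ ?_
          · intro i; rw [inner_neg_right, abs_neg, ← hse i]; exact hs i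
          · intro i hcon
            rw [inner_neg_right, ← hse i] at hcon
            have hsi : s i = -r i := by linarith
            rw [← hτe i]
            exact hjm i (by simp only [Finset.mem_filter, Finset.mem_univ, true_and]; exact hsi)
          · intro i hcon
            rw [inner_neg_right, ← hse i] at hcon
            have hsi : s i = r i := by linarith
            rw [← hτe i]
            exact hc i jm hsi hjmB
        · obtain ⟨im, himF, him⟩ := Finset.exists_max_image
            (Finset.univ.filter (fun i => s i = r i)) τ
            ⟨i₀, by simp only [Finset.mem_filter, Finset.mem_univ, true_and]; exact hi₀⟩
          have himA : s im = r im := by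
            simpa only [Finset.mem_filter, Finset.mem_univ, true_and] using himF
          refine rotation c r hr hv₁ hnn1 hb1 p₁ (τ im) ?_ ?_ ?_
          · intro i; rw [← hse i]; exact hs i
          · intro i hcon
            rw [← hse i] at hcon
            rw [← hτe i]
            exact him i (by simp only [Finset.mem_filter, Finset.mem_univ, true_and]; exact hcon)
          · intro i hcon
            rw [← hse i] at hcon
            rw [← hτe i]
            exact hc im i himA hcon
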